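/- Let H be a finite-dimensional complex inner product space, let C be a finite index set, let ψ_c ∈ H for c ∈ C satisfy ‖ψ_c‖ ≤ 1, and let E_c (c ∈ C) be orthogonal projections on H whose ranges are pairwise orthogonal (i.e., E_c E_{c'} = 0 for c ≠ c'). Then Σ_{c ∈ C} Re⟨ψ_c, E_c ψ_c⟩ ≤ dim span{ψ_c : c ∈ C}. In particular, if c is drawn uniformly from C, the probability of correctly identifying c by measuring ψ_c with the measurement {E_c} is at most dim span{ψ_c : c ∈ C}/|C|. -/

import Mathlib

/-- Let `H` be a finite-dimensional complex inner product space, `C` a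
finite index set, `ψ_c ∈ H` with `‖ψ_c‖ ≤ 1`, and `E_c` orthogonal projections with
pairwise orthogonal ranges (`E_c E_{c'} = 0` for `c ≠ c'`).  Then
`Σ_c Re⟨ψ_c, E_c ψ_c⟩ ≤ dim span{ψ_c : c ∈ C}`. -/
theorem stmt_7 (H : Type*) [NormedAddCommGroup H] [InnerProductSpace ℂ H]
    [FiniteDimensional ℂ H] (C : Type*) [Fintype C]
    (ψ : C → H) (hψ : ∀ c, ‖ψ c‖ ≤ 1)
    (E : C → H →L[ℂ] H)
    (hidem : ∀ c, (E c).comp (E c) = E c)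
    (hsa : ∀ c, IsSelfAdjoint (E c))
    (horth : ∀ c c', c ≠ c' → (E c).comp (E c') = 0) :
    ∑ c, (inner ℂ (ψ c) (E c (ψ c)) : ℂ).re ≤
      (Module.finrank ℂ (Submodule.span ℂ (Set.range ψ)) : ℝ) := by
  classical
  have hsym : ∀ c, (E c : H →ₗ[ℂ] H).IsSymmetric := fun c =>
    (ContinuousLinearMap.isSelfAdjoint_iff_isSymmetric.mp (hsa c))
  -- ⟨x, E x⟩ = ‖E x‖²
  have hre : ∀ c (x : H), (inner ℂ x (E c x) : ℂ) = (‖E c x‖ ^ 2 : ℝ) := by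
    intro c x
    have h1 : E c (E c x) = E c x := by
      have := congrArg (fun T => T x) (hidem c)
      simpa using this
    calc (inner ℂ x (E c x) : ℂ) = inner ℂ x (E c (E c x)) := by rw [h1]
      _ = inner ℂ (E c x) (E c x) := ((hsym c) x (E c x)).symm
      _ = (‖E c x‖ ^ 2 : ℝ) := by
        rw [inner_self_eq_norm_sq_to_K]; norm_num
  -- Bessel-type inequality
  have bessel : ∀ x : H, ∑ c, ‖E c x‖ ^ 2 ≤ ‖x‖ ^ 2 := by
    intro x
    set y := ∑ c, E c x with hy
    set S := ∑ c, ‖E c x‖ ^ 2 with hS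
    have hS0 : 0 ≤ S := Finset.sum_nonneg fun c _ => sq_nonneg _
    have hxy : (inner ℂ x y : ℂ) = (S : ℝ) := by
      rw [hy, inner_sum]
      rw [hS]
      push_cast
      exact Finset.sum_congr rfl fun c _ => by rw [hre c x]; push_cast; ring
    have horth' : ∀ c c', c ≠ c' → (inner ℂ (E c x) (E c' x) : ℂ) = 0 := by
      intro c c' h
      have h0 : E c (E c' x) = 0 := by
        have := congrArg (fun T => T x) (horth c c' h)
        simpa using this
      calc (inner ℂ (E c x) (E c' x) : ℂ) = inner ℂ x (E c (E c' x)) := (hsym c) x _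
        _ = 0 := by rw [h0, inner_zero_right]
    have hyy : (inner ℂ y y : ℂ) = (S : ℝ) := by
      rw [hy, sum_inner]
      have : ∀ c : C, (inner ℂ (E c x) (∑ c', E c' x) : ℂ) = (‖E c x‖ ^ 2 : ℝ) := by
        intro c
        rw [inner_sum]
        rw [Finset.sum_eq_single c]
        · rw [inner_self_eq_norm_sq_to_K]; norm_num
        · intro c' _ h; exact horth' c c' (Ne.symm h)
        · intro h; exact absurd (Finset.mem_univ c) h
      rw [Finset.sum_congr rfl fun c _ => this c, hS]
      push_cast; ring
    have hny : ‖y‖ ^ 2 = S := by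
      have h := inner_self_eq_norm_sq (𝕜 := ℂ) y
      rw [hyy] at h
      simpa using h.symm
    have hle : S ≤ ‖x‖ * ‖y‖ := by
      have h1 := re_inner_le_norm (𝕜 := ℂ) x y
      rw [hxy] at h1
      simpa using h1
    nlinarith [norm_nonneg x, norm_nonneg y, sq_nonneg (‖x‖ - ‖y‖)]
  -- setup basis of span
  set V := Submodule.span ℂ (Set.range ψ) with hV
  set d := Module.finrank ℂ V with hd
  let b : OrthonormalBasis (Fin d) ℂ V := stdOrthonormalBasis ℂ V
  let v : Fin d → H := fun i => (b i : H)
  have hvnorm : ∀ i, ‖v i‖ = 1 := fun i => by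
    exact b.orthonormal.1 i
  have hmem : ∀ c, ψ c ∈ V := fun c => Submodule.subset_span ⟨c, rfl⟩
  let φ : C → V := fun c => (⟨ψ c, hmem c⟩ : V)
  let a : C → Fin d → ℝ := fun c i => ‖b.repr (φ c) i‖
  have hdecomp : ∀ c, ψ c = ∑ i, b.repr (φ c) i • v i := by
    intro c
    have := b.sum_repr (φ c)
    have h2 := congrArg (Subtype.val : V → H) this
    simp only [AddSubmonoidClass.coe_finset_sum] at h2
    simpa [v, φ] using h2.symm
  have hcoord : ∀ c, ∑ i, a c i ^ 2 ≤ 1 := by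
    intro c
    have h1 : ‖b.repr (φ c)‖ = ‖φ c‖ := LinearIsometryEquiv.norm_map _ _
    have h2 : ‖φ c‖ = ‖ψ c‖ := rfl
    have h3 := EuclideanSpace.norm_eq (b.repr (φ c))
    have h4 : ∑ i, a c i ^ 2 = ‖ψ c‖ ^ 2 := by
      rw [← h2, ← h1, h3, Real.sq_sqrt (Finset.sum_nonneg fun i _ => sq_nonneg _)]
    rw [h4]
    nlinarith [hψ c, norm_nonneg (ψ c)]
  -- key per-c bound
  have key : ∀ c, ‖E c (ψ c)‖ ^ 2 ≤ ∑ i, ‖E c (v i)‖ ^ 2 := by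
    intro c
    have h1 : ‖E c (ψ c)‖ ≤ ∑ i, a c i * ‖E c (v i)‖ := by
      rw [hdecomp c]
      rw [map_sum]
      refine (norm_sum_le _ _).trans ?_
      refine Finset.sum_le_sum fun i _ => ?_
      rw [map_smul, norm_smul]
    have h2 : (∑ i, a c i * ‖E c (v i)‖) ^ 2 ≤
        (∑ i, a c i ^ 2) * (∑ i, ‖E c (v i)‖ ^ 2) :=
      Finset.sum_mul_sq_le_sq_mul_sq Finset.univ _ _
    have h3 : 0 ≤ ∑ i, a c i * ‖E c (v i)‖ :=
      Finset.sum_nonneg fun i _ => mul_nonneg (norm_nonneg _) (norm_nonneg _)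
    have h4 : 0 ≤ ∑ i, ‖E c (v i)‖ ^ 2 :=
      Finset.sum_nonneg fun i _ => sq_nonneg _
    calc ‖E c (ψ c)‖ ^ 2 ≤ (∑ i, a c i * ‖E c (v i)‖) ^ 2 :=
          pow_le_pow_left₀ (norm_nonneg _) h1 2
      _ ≤ (∑ i, a c i ^ 2) * (∑ i, ‖E c (v i)‖ ^ 2) := h2
      _ ≤ 1 * (∑ i, ‖E c (v i)‖ ^ 2) := by
          exact mul_le_mul_of_nonneg_right (hcoord c) h4
      _ = ∑ i, ‖E c (v i)‖ ^ 2 := one_mul _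
  -- finish
  calc ∑ c, (inner ℂ (ψ c) (E c (ψ c)) : ℂ).re = ∑ c, ‖E c (ψ c)‖ ^ 2 := by
        refine Finset.sum_congr rfl fun c _ => ?_
        rw [hre c (ψ c)]; norm_cast
    _ ≤ ∑ c, ∑ i, ‖E c (v i)‖ ^ 2 := Finset.sum_le_sum fun c _ => key c
    _ = ∑ i, ∑ c, ‖E c (v i)‖ ^ 2 := Finset.sum_comm
    _ ≤ ∑ i : Fin d, (1 : ℝ) := by
        refine Finset.sum_le_sum fun i _ => ?_
        have := bessel (v i)
        rwa [hvnorm i, one_pow] at this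
    _ = (d : ℝ) := by simp
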